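/- Let K, C ⊆ ℝⁿ be closed and let 𝒫 := {x ∈ ∂K ∩ ∂C : every neighborhood of x intersects C \ K}. Assume property (Pr): the map x ↦ T_K(x), restricted to ∂K, is continuous (lower and upper semicontinuous as a set-valued map) at every point of 𝒫, and for every x ∈ 𝒫 every neighborhood of x intersects ∂K ∩ int(C). Then T^a_{∂K}(x) = T_{∂K}(x) for all x ∈ 𝒫. -/

import Mathlib

open MeasureTheory Filter Topology Set
open scoped RealInnerProductSpace

/-- Euclidean space ℝⁿ. -/
abbrev Euc (n : ℕ) := EuclideanSpace ℝ (Fin n)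

variable {E : Type*} [NormedAddCommGroup E] [InnerProductSpace ℝ E]

/-- The contingent (Bouligand) cone to `S` at `x`:
`v` belongs to it iff there are sequences `tᵢ → 0⁺` and `vᵢ → v` with `x + tᵢ • vᵢ ∈ S`. -/
def contingentCone (S : Set E) (x : E) : Set E :=
  {v | ∃ t : ℕ → ℝ, ∃ w : ℕ → E,
    (∀ i, 0 < t i) ∧ Tendsto t atTop (𝓝 0) ∧ Tendsto w atTop (𝓝 v) ∧
    ∀ i, x + t i • w i ∈ S}

/-- The adjacent cone to `S` at `x`:
`v` belongs to it iff for every sequence `tᵢ → 0⁺` there is `vᵢ → v` with `x + tᵢ • vᵢ ∈ S`. -/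
def adjacentCone (S : Set E) (x : E) : Set E :=
  {v | ∀ t : ℕ → ℝ, (∀ i, 0 < t i) → Tendsto t atTop (𝓝 0) →
    ∃ w : ℕ → E, Tendsto w atTop (𝓝 v) ∧ ∀ i, x + t i • w i ∈ S}

/-- The Dubovitskiy cone to `S` at `x`. -/
def dubovitskiyCone (S : Set E) (x : E) : Set E :=
  {v | ∀ t : ℕ → ℝ, ∀ w : ℕ → E, (∀ i, 0 < t i) → Tendsto t atTop (𝓝 0) →
    Tendsto w atTop (𝓝 v) → ∀ᶠ i in atTop, x + t i • w i ∈ interior S}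

/-- Lower semicontinuity of a set-valued map at a point along a filter `l`. -/
def SVLowerSemicontinuousAt (F : E → Set E) (l : Filter E) (x : E) : Prop :=
  ∀ U : Set E, IsOpen U → (F x ∩ U).Nonempty → ∀ᶠ y in l, (F y ∩ U).Nonempty

/-- Upper semicontinuity of a set-valued map at a point along a filter `l`. -/
def SVUpperSemicontinuousAt (F : E → Set E) (l : Filter E) (x : E) : Prop :=
  ∀ U : Set E, IsOpen U → F x ⊆ U → ∀ᶠ y in l, F y ⊆ U

/-- Continuity (lower and upper semicontinuity) of a set-valued map at `x` along `l`. -/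
def SVContinuousAt (F : E → Set E) (l : Filter E) (x : E) : Prop :=
  SVLowerSemicontinuousAt F l x ∧ SVUpperSemicontinuousAt F l x

/-- Continuity of a set-valued map. -/
def SVContinuous (F : E → Set E) : Prop := ∀ x, SVContinuousAt F (𝓝 x) x

/-- Local boundedness of a set-valued map. -/
def SVLocallyBounded (F : E → Set E) : Prop :=
  ∀ x : E, ∃ N ∈ 𝓝 x, ∃ M : ℝ, ∀ y ∈ N, ∀ v ∈ F y, ‖v‖ ≤ M

/-- One-sided local Lipschitz continuity of a set-valued map. -/
def OneSidedLocallyLipschitz (F : E → Set E) : Prop :=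
  ∀ N : Set E, N.Nonempty → IsCompact N → ∃ k > 0, ∀ x₁ ∈ N, ∀ x₂ ∈ N,
    ∀ w₁ ∈ F x₁, ∃ w₂ ∈ F x₂, ⟪x₁ - x₂, w₁⟫ ≤ ⟪x₁ - x₂, w₂⟫ + k * ‖x₁ - x₂‖ ^ 2

/-- The standing assumption (SA): `C` closed; `F x` nonempty, closed, convex on `C`;
`F` continuous and one-sided locally Lipschitz. -/
structure StandingAssumption (F : E → Set E) (C : Set E) : Prop where
  closed_C : IsClosed C
  nonempty_images : ∀ x ∈ C, (F x).Nonempty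
  closed_images : ∀ x ∈ C, IsClosed (F x)
  convex_images : ∀ x ∈ C, Convex ℝ (F x)
  continuous : SVContinuous F
  osLipschitz : OneSidedLocallyLipschitz F

/-- Admissible solution domains: `[0,T]` with `T ≥ 0`, or `[0,T)` with `T ∈ (0,∞]`. -/
def IsSolDomain (D : Set ℝ) : Prop :=
  (∃ T : ℝ, 0 ≤ T ∧ D = Icc 0 T) ∨ (∃ T : ℝ, 0 < T ∧ D = Ico 0 T) ∨ D = Ici 0

/-- `φ` is a solution of the constrained differential inclusion `ẋ ∈ F(x)`, `x ∈ C`,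
on the domain `D`: it stays in `C` and is a locally absolutely continuous arc whose
derivative is an integrable selection of `F ∘ φ` almost everywhere. -/
def IsSolution (F : E → Set E) (C : Set E) (D : Set ℝ) (φ : ℝ → E) : Prop :=
  IsSolDomain D ∧ (∀ t ∈ D, φ t ∈ C) ∧
  ∃ g : ℝ → E,
    (∀ᵐ t ∂(volume.restrict D), g t ∈ F (φ t)) ∧
    ∀ t ∈ D, IntervalIntegrable g volume 0 t ∧ φ t = φ 0 + ∫ s in (0:ℝ)..t, g s

/-- Forward invariance of `K` for the constrained differential inclusion. -/
def ForwardInvariant (F : E → Set E) (C K : Set E) : Prop :=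
  ∀ D : Set ℝ, ∀ φ : ℝ → E, IsSolution F C D φ → φ 0 ∈ K → ∀ t ∈ D, φ t ∈ K

/-- The set 𝒫 of critical points: points of `∂K ∩ ∂C` every neighborhood of which
meets `C \ K`. -/
def critSet (K C : Set E) : Set E :=
  {x | x ∈ frontier K ∩ frontier C ∧ ∀ N ∈ 𝓝 x, (N ∩ (C \ K)).Nonempty}

/-- The set of initial speeds `F_φ(x)` of an arc `φ` at `x`. -/
def initialSpeeds (φ : ℝ → E) (x : E) : Set E :=
  {v | ∃ t : ℕ → ℝ, (∀ i, 0 < t i) ∧ Tendsto t atTop (𝓝 0) ∧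
    Tendsto (fun i => (t i)⁻¹ • (φ (t i) - x)) atTop (𝓝 v)}

/-- The metric projection of `y` onto `S`. -/
def projSet (S : Set E) (y : E) : Set E := {z ∈ S | dist y z = Metric.infDist y S}

/-- `φ` leaves `K` immediately: for some `T > 0`, `φ(t) ∈ C \ K` on `(0,T]`. -/
def LeavesImmediately (K C : Set E) (D : Set ℝ) (φ : ℝ → E) : Prop :=
  ∃ T > 0, Ioc 0 T ⊆ D ∧ ∀ t ∈ Ioc 0 T, φ t ∈ C \ K

/-- Property (★): for some `T > 0`, `Proj_{∂K}(φ(t)) ∩ int C ≠ ∅` on `(0,T]`. -/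
def PropStar (K C : Set E) (D : Set ℝ) (φ : ℝ → E) : Prop :=
  ∃ T > 0, Ioc 0 T ⊆ D ∧
    ∀ t ∈ Ioc 0 T, (projSet (frontier K) (φ t) ∩ interior C).Nonempty

/-- Euclidean norm of the concatenated vector `(v₁, v₂) ∈ ℝ²ⁿ`. -/
noncomputable def pairNorm (v₁ v₂ : E) : ℝ := Real.sqrt (‖v₁‖ ^ 2 + ‖v₂‖ ^ 2)

/-- Assumption 1: `F(x) ⊆ T_K(x)` on 𝒫. -/
def Assumption1 (F : E → Set E) (K C : Set E) : Prop :=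
  ∀ x ∈ critSet K C, F x ⊆ contingentCone K x

/-- Assumption 2: `F(x) ∩ T_{∂K ∩ ∂C}(x) = ∅` on 𝒫. -/
def Assumption2 (F : E → Set E) (K C : Set E) : Prop :=
  ∀ x ∈ critSet K C, F x ∩ contingentCone (frontier K ∩ frontier C) x = ∅

/-- Assumption 3 (transversality) at a point `x`. -/
def Assumption3At (K C : Set E) (x : E) : Prop :=
  contingentCone (frontier K) x = adjacentCone (frontier K) x ∧
  contingentCone C x = adjacentCone C x ∧
  ∃ N ∈ 𝓝 x, ∃ c > 0, ∃ α ∈ Ico (0:ℝ) 1,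
    ∀ x₁ ∈ (frontier K \ C) ∩ N, ∀ x₂ ∈ (frontier C \ frontier K) ∩ N,
      ∃ v₁ ∈ contingentCone (frontier K) x₁, ∃ v₂ ∈ contingentCone C x₂,
        pairNorm v₁ v₂ ≤ c * ‖x₁ - x₂‖ ∧ ‖(x₂ - x₁) - (v₁ - v₂)‖ ≤ α * ‖x₁ - x₂‖

/-- Assumption 3 (transversality) on 𝒫. -/
def Assumption3 (K C : Set E) : Prop := ∀ x ∈ critSet K C, Assumption3At K C x

/-- The transversality condition (◇) for a pair of sets at `x₀`. -/
def TransversalAt (K₁ K₂ : Set E) (x₀ : E) : Prop :=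
  ∃ N ∈ 𝓝 x₀, ∃ c > 0, ∃ α ∈ Ico (0:ℝ) 1,
    ∀ x₁ ∈ (frontier K₁ \ K₂) ∩ N, ∀ x₂ ∈ (frontier K₂ \ K₁) ∩ N,
      ∃ v₁ ∈ contingentCone K₁ x₁, ∃ v₂ ∈ contingentCone K₂ x₂,
        pairNorm v₁ v₂ ≤ c * ‖x₁ - x₂‖ ∧ ‖(x₂ - x₁) - (v₁ - v₂)‖ ≤ α * ‖x₁ - x₂‖


/-! ### Auxiliary lemmas for Statement 3 -/

section Aux3

open Metric

lemma contingentCone_mono {S T : Set E} (h : S ⊆ T) (x : E) :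
    contingentCone S x ⊆ contingentCone T x := by
  rintro v ⟨t, w, h1, h2, h3, h4⟩
  exact ⟨t, w, h1, h2, h3, fun i => h (h4 i)⟩

lemma contingentCone_smul_mem {S : Set E} {x v : E} (hv : v ∈ contingentCone S x)
    {l : ℝ} (hl : 0 < l) : l • v ∈ contingentCone S x := by
  obtain ⟨t, w, h1, h2, h3, h4⟩ := hv
  refine ⟨fun i => l⁻¹ * t i, fun i => l • w i, fun i => mul_pos (inv_pos.mpr hl) (h1 i),
    by simpa using h2.const_mul l⁻¹, h3.const_smul l, fun i => ?_⟩
  have : (l⁻¹ * t i) • l • w i = t i • w i := by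
    rw [smul_smul, mul_comm l⁻¹ (t i), mul_assoc, inv_mul_cancel₀ hl.ne', mul_one]
  rw [this]; exact h4 i

lemma closure_contingentCone_smul_mem {S : Set E} {x w : E}
    (hw : w ∈ closure (contingentCone S x)) {l : ℝ} (hl : 0 < l) :
    l • w ∈ closure (contingentCone S x) := by
  obtain ⟨y, hy, hyt⟩ := mem_closure_iff_seq_limit.mp hw
  exact mem_closure_iff_seq_limit.mpr
    ⟨fun k => l • y k, fun k => contingentCone_smul_mem (hy k) hl, hyt.const_smul l⟩

/-- A nearest point of `S` to a point `p ∉ S` lies on the frontier of `S`. -/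
lemma mem_frontier_of_nearest {S : Set E} {p z : E} (hz : z ∈ S) (hp : p ∉ S)
    (hd : dist p z = infDist p S) : z ∈ frontier S := by
  have hpz : p ≠ z := fun h => hp (h ▸ hz)
  have hdpos : 0 < dist p z := dist_pos.mpr hpz
  refine ⟨subset_closure hz, fun hint => ?_⟩
  obtain ⟨rr, hrr, hball⟩ := Metric.isOpen_iff.mp isOpen_interior z hint
  have hm0 : 0 < min (rr / 2) (dist p z / 2) := lt_min (by positivity) (by positivity)
  set m := min (rr / 2) (dist p z / 2) with hm
  have hmd : m < dist p z := lt_of_le_of_lt (min_le_right _ _) (by linarith)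
  have hmrr : m < rr := lt_of_le_of_lt (min_le_left _ _) (by linarith)
  have hnorm : ‖p - z‖ = dist p z := (dist_eq_norm p z).symm
  set z' := z + (m / dist p z) • (p - z) with hz'
  have hz'S : z' ∈ S := by
    refine interior_subset (hball ?_)
    have h1 : ‖z' - z‖ = (m / dist p z) * ‖p - z‖ := by
      rw [hz', add_sub_cancel_left, norm_smul, Real.norm_eq_abs,
        abs_of_pos (div_pos hm0 hdpos)]
    rw [mem_ball, dist_eq_norm, h1, hnorm]
    calc m / dist p z * dist p z = m := by field_simp
      _ < rr := hmrr
  have hd' : dist p z' = dist p z - m := by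
    have h2 : p - z' = (1 - m / dist p z) • (p - z) := by
      rw [hz', smul_sub, sub_smul, one_smul, smul_sub]; abel
    have h3 : (0:ℝ) ≤ 1 - m / dist p z := by
      have : m / dist p z ≤ 1 := (div_le_one hdpos).mpr hmd.le
      linarith
    rw [dist_eq_norm, h2, norm_smul, Real.norm_eq_abs, abs_of_nonneg h3, hnorm]
    field_simp
  have : infDist p S ≤ dist p z - m := hd' ▸ infDist_le_dist_of_mem hz'S
  rw [← hd] at this
  linarith

/-- On the segment from a point of `K` to a point outside `K` there is a frontier point,
no farther from the outside endpoint than the inside endpoint is. -/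
lemma segment_frontier {K : Set E} (hK : IsClosed K) {a b : E} (ha : a ∈ K) (hb : b ∉ K) :
    ∃ z ∈ frontier K, dist b z ≤ dist b a := by
  set f : ℝ → E := fun s => b + s • (a - b) with hf
  have hfc : Continuous f := by fun_prop
  set A := {s ∈ Icc (0:ℝ) 1 | f s ∈ K} with hA
  have h1A : (1:ℝ) ∈ A := by
    refine ⟨⟨zero_le_one, le_refl 1⟩, ?_⟩
    show f 1 ∈ K; simp [hf]; exact ha
  have hAclosed : IsClosed A := (isClosed_Icc.inter (hK.preimage hfc))
  have hAbdd : BddBelow A := ⟨0, fun s hs => hs.1.1⟩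
  set s₀ := sInf A with hs₀
  have hs₀A : s₀ ∈ A := hAclosed.csInf_mem ⟨1, h1A⟩ hAbdd
  have hs₀0 : 0 < s₀ := by
    rcases lt_or_eq_of_le hs₀A.1.1 with h | h
    · exact h
    · exfalso; apply hb; have : f s₀ ∈ K := hs₀A.2
      rw [← h] at this; simpa [hf] using this
  have hcl : f s₀ ∈ closure Kᶜ := by
    have hseq : ∀ k : ℕ, f (s₀ * (1 - 1 / (k + 2))) ∈ Kᶜ := by
      intro k
      have hk2 : (0:ℝ) < (k:ℝ) + 2 := by positivity
      have hfrac : (0:ℝ) < 1 / ((k:ℝ) + 2) := by positivity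
      have hlt : s₀ * (1 - 1 / (k + 2)) < s₀ := by nlinarith
      have hge : 0 ≤ s₀ * (1 - 1 / (k + 2)) := by
        have : 1 / ((k:ℝ) + 2) ≤ 1 := by rw [div_le_one hk2]; linarith
        nlinarith
      intro hmem
      have : s₀ * (1 - 1 / (k + 2)) ∈ A :=
        ⟨⟨hge, le_trans hlt.le hs₀A.1.2⟩, hmem⟩
      exact absurd (csInf_le hAbdd this) (not_le.mpr hlt)
    have htend : Tendsto (fun k : ℕ => f (s₀ * (1 - 1 / (k + 2)))) atTop (𝓝 (f s₀)) := by
      apply hfc.continuousAt.tendsto.comp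
      have h0 : Tendsto (fun k : ℕ => 1 / ((k:ℝ) + 2)) atTop (𝓝 0) := by
        have h := tendsto_one_div_add_atTop_nhds_zero_nat (𝕜 := ℝ)
        have := h.comp (tendsto_add_atTop_nat 1)
        refine this.congr (fun k => ?_)
        simp only [Function.comp_apply]; push_cast; ring_nf
      have : Tendsto (fun k : ℕ => s₀ * (1 - 1 / ((k:ℝ) + 2))) atTop (𝓝 (s₀ * (1 - 0))) :=
        (h0.const_sub 1).const_mul s₀
      simpa using this
    exact mem_closure_of_tendsto htend (Eventually.of_forall hseq)
  refine ⟨f s₀, ⟨subset_closure hs₀A.2, ?_⟩, ?_⟩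
  · rw [closure_compl] at hcl; exact hcl
  · have h4 : dist b (f s₀) = s₀ * dist b a := by
      have h5 : b - f s₀ = s₀ • (b - a) := by
        show b - (b + s₀ • (a - b)) = s₀ • (b - a)
        rw [smul_sub, smul_sub]; abel
      rw [dist_eq_norm, h5, norm_smul, Real.norm_eq_abs, abs_of_pos hs₀0, dist_eq_norm]
    rw [h4]
    have hba : 0 ≤ dist b a := dist_nonneg
    nlinarith [hs₀A.1.2]

end Aux3

section Aux3b

open Metric

/-- Directions pointing into the proximal-normal exclusion ball are not tangent. -/
lemma normal_exclusion {K : Set E} (hK : IsClosed K) {ζ b : E} (hb : b ∈ K) (hζ : ζ ∉ K)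
    (hd : dist ζ b = infDist ζ K) {w : E}
    (hw : ‖w - (infDist ζ K)⁻¹ • (ζ - b)‖ < 1) : w ∉ contingentCone K b := by
  set r := infDist ζ K with hr
  have hr0 : 0 < r := (hK.notMem_iff_infDist_pos ⟨b, hb⟩).mp hζ
  set ν := r⁻¹ • (ζ - b) with hν
  have hζb : ‖ζ - b‖ = r := by rw [← dist_eq_norm, hd]
  have hlow : ∀ y ∈ K, ∀ t : ℝ, 0 < t → t ≤ r →
      t * (1 - ‖w - ν‖) ≤ ‖b + t • w - y‖ := by
    intro y hy t ht htr
    have h1 : r ≤ dist ζ y := infDist_le_dist_of_mem hy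
    have h2 : ‖ζ - (b + t • ν)‖ = r - t := by
      have : ζ - (b + t • ν) = (1 - t/r) • (ζ - b) := by
        rw [hν, smul_smul, sub_smul, one_smul]
        rw [div_eq_mul_inv]
        abel
      rw [this, norm_smul, Real.norm_eq_abs, hζb, abs_of_nonneg]
      · field_simp
      · have : t/r ≤ 1 := (div_le_one hr0).mpr htr
        linarith
    have h3 : t ≤ ‖b + t • ν - y‖ := by
      have htri : dist ζ y ≤ ‖ζ - (b + t • ν)‖ + ‖b + t • ν - y‖ := by
        rw [dist_eq_norm]
        have : ζ - y = (ζ - (b + t • ν)) + (b + t • ν - y) := by abel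
        rw [this]; exact norm_add_le _ _
      rw [h2] at htri; linarith
    have h4 : ‖b + t • ν - y‖ ≤ ‖b + t • w - y‖ + t * ‖w - ν‖ := by
      have : b + t • ν - y = (b + t • w - y) + t • (ν - w) := by
        rw [smul_sub]; abel
      rw [this]
      calc ‖(b + t • w - y) + t • (ν - w)‖ ≤ ‖b + t • w - y‖ + ‖t • (ν - w)‖ :=
            norm_add_le _ _
        _ = ‖b + t • w - y‖ + t * ‖w - ν‖ := by
            rw [norm_smul, Real.norm_eq_abs, abs_of_pos ht, norm_sub_rev ν w]
    nlinarith
  rintro ⟨τ, ω, hτpos, hτ0, hω, hmem⟩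
  have hc : 0 < 1 - ‖w - ν‖ := by linarith
  have hev1 : ∀ᶠ m in atTop, τ m < r := hτ0.eventually (gt_mem_nhds hr0)
  have hev2 : ∀ᶠ m in atTop, ω m ∈ ball w (1 - ‖w - ν‖) :=
    hω.eventually (Metric.ball_mem_nhds w hc)
  obtain ⟨m, hm1, hm2⟩ := (hev1.and hev2).exists
  have h5 := hlow _ (hmem m) (τ m) (hτpos m) hm1.le
  have h6 : ‖b + τ m • w - (b + τ m • ω m)‖ = τ m * ‖w - ω m‖ := by
    have : b + τ m • w - (b + τ m • ω m) = τ m • (w - ω m) := by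
      rw [smul_sub]; abel
    rw [this, norm_smul, Real.norm_eq_abs, abs_of_pos (hτpos m)]
  rw [h6] at h5
  have h7 : ‖w - ω m‖ < 1 - ‖w - ν‖ := by
    rw [mem_ball, dist_eq_norm, norm_sub_rev] at hm2; exact hm2
  nlinarith [hτpos m]

/-- Marching along an (approximate) tangent direction: from lower semicontinuity of the
contingent cone along the frontier, the distance to `K` grows sublinearly. -/
lemma march_tangent [ProperSpace E] {K : Set E} (hK : IsClosed K) {x : E} (hx : x ∈ K)
    (hlsc : SVLowerSemicontinuousAt (contingentCone K) (𝓝[frontier K] x) x)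
    {w₀ : E} (hw₀ : w₀ ∈ closure (contingentCone K x)) {ε : ℝ} (hε : 0 < ε) :
    ∃ δ > 0, ∀ t : ℝ, 0 < t → t ≤ δ → infDist (x + t • w₀) K ≤ ε * t := by
  set ε₁ := min ε 1 with hε₁def
  have hε₁0 : 0 < ε₁ := lt_min hε one_pos
  have hε₁ε : ε₁ ≤ ε := min_le_left _ _
  have hε₁1 : ε₁ ≤ 1 := min_le_right _ _
  obtain ⟨w₁, hw₁S, hw₁d⟩ := Metric.mem_closure_iff.mp hw₀ (ε₁/4) (by positivity)
  have hev := hlsc (ball w₀ (ε₁/4)) isOpen_ball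
    ⟨w₁, hw₁S, by rw [mem_ball, dist_comm]; exact hw₁d⟩
  obtain ⟨V, hVopen, hxV, hVsub⟩ := mem_nhdsWithin.mp hev
  obtain ⟨ρ, hρ0, hρball⟩ := Metric.isOpen_iff.mp hVopen x hxV
  have hS : ∀ y, y ∈ ball x ρ → y ∈ frontier K →
      (contingentCone K y ∩ ball w₀ (ε₁/4)).Nonempty := by
    intro y h1 h2; exact hVsub ⟨hρball h1, h2⟩
  refine ⟨ρ / (‖w₀‖ + 2), by positivity, ?_⟩
  set δ := ρ / (‖w₀‖ + 2) with hδdef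
  have hδ0 : 0 < δ := by positivity
  intro tt htt httδ
  by_contra hgt; push_neg at hgt
  have hgt1 : ε₁ * tt < infDist (x + tt • w₀) K :=
    lt_of_le_of_lt (by nlinarith) hgt
  set g : ℝ → ℝ := fun s => infDist (x + s • w₀) K with hgdef
  have hgc : Continuous g := (Metric.continuous_infDist_pt K).comp (by fun_prop)
  set A := {s ∈ Icc (0:ℝ) tt | g s ≤ ε₁ * s} with hA
  have h0A : (0:ℝ) ∈ A := by
    refine ⟨⟨le_refl 0, htt.le⟩, ?_⟩
    have : g 0 = 0 := by
      show infDist (x + (0:ℝ) • w₀) K = 0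
      rw [zero_smul, add_zero]; exact infDist_zero_of_mem hx
    rw [this]; simp
  have hAcomp : IsCompact A := by
    apply isCompact_Icc.inter_right
    exact isClosed_le hgc (continuous_const.mul continuous_id)
  have hTmem := hAcomp.sSup_mem ⟨0, h0A⟩
  set T := sSup A with hT
  have hT1 : g T ≤ ε₁ * T := hTmem.2
  have hTIcc : T ∈ Icc (0:ℝ) tt := hTmem.1
  have hTlt : T < tt := by
    rcases lt_or_eq_of_le hTIcc.2 with h | h
    · exact h
    · exfalso; rw [h] at hT1; linarith
  have hAfter : ∀ s, T < s → s ≤ tt → ε₁ * s < g s := by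
    intro s h1 h2
    by_contra h; push_neg at h
    have : s ∈ A := ⟨⟨le_trans hTIcc.1 h1.le, h2⟩, h⟩
    exact absurd (le_csSup hAcomp.bddAbove this) (not_le.mpr h1)
  set p := x + T • w₀ with hp
  by_cases hpK : p ∈ interior K
  · obtain ⟨rr, hrr, hball⟩ := Metric.isOpen_iff.mp isOpen_interior p hpK
    have hq0 : 0 < min (tt - T) (rr / (‖w₀‖ + 1)) := by
      apply lt_min (by linarith) (by positivity)
    set h := min (tt - T) (rr / (‖w₀‖ + 1)) / 2 with hhdef
    have hh0 : 0 < h := by positivity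
    have hhtt : T + h ≤ tt := by
      have h1 : h ≤ (tt - T) / 2 := by
        have := min_le_left (tt - T) (rr / (‖w₀‖ + 1)); rw [hhdef]; linarith
      linarith
    have hmem : x + (T + h) • w₀ ∈ K := by
      apply interior_subset
      apply hball
      rw [mem_ball]
      have : x + (T + h) • w₀ - p = h • w₀ := by
        rw [hp, add_smul]; abel
      rw [dist_eq_norm, this, norm_smul, Real.norm_eq_abs, abs_of_pos hh0]
      have h2 : h ≤ rr / (‖w₀‖ + 1) / 2 := by
        have := min_le_right (tt - T) (rr / (‖w₀‖ + 1)); rw [hhdef]; linarith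
      have h3 : 0 ≤ ‖w₀‖ := norm_nonneg _
      rw [div_div] at h2
      have h4 : 0 < ‖w₀‖ + 1 := by linarith
      have h2' : h * ((‖w₀‖ + 1) * 2) ≤ rr := by
        rw [le_div_iff₀ (by positivity)] at h2; exact h2
      nlinarith [h2', hh0]
    have h5 := hAfter (T + h) (by linarith) hhtt
    have h6 : g (T + h) = 0 := infDist_zero_of_mem hmem
    have h7 : 0 < T + h := by have := hTIcc.1; linarith
    nlinarith
  · -- p is not interior: find a frontier point within g T of p
    obtain ⟨z, hzfr, hzd⟩ : ∃ z ∈ frontier K, dist p z ≤ g T := by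
      by_cases hpK2 : p ∈ K
      · exact ⟨p, ⟨subset_closure hpK2, hpK⟩, by rw [dist_self]; exact infDist_nonneg⟩
      · obtain ⟨a, haK, had⟩ := hK.exists_infDist_eq_dist ⟨x, hx⟩ p
        obtain ⟨z, hz1, hz2⟩ := segment_frontier hK haK hpK2
        exact ⟨z, hz1, by rw [← had] at hz2; exact hz2⟩
    have hzball : z ∈ ball x ρ := by
      rw [mem_ball]
      have h1 : dist z x ≤ dist z p + dist p x := dist_triangle _ _ _
      have h2 : dist p x = T * ‖w₀‖ := by
        rw [hp, dist_eq_norm]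
        have : x + T • w₀ - x = T • w₀ := by abel
        rw [this, norm_smul, Real.norm_eq_abs, abs_of_nonneg hTIcc.1]
      have h3 : dist z p ≤ ε₁ * T := by rw [dist_comm]; linarith
      have h4 : T ≤ δ := le_trans hTIcc.2 httδ
      have h5 : ε₁ * T ≤ T := by nlinarith [hTIcc.1]
      have h6 : δ * (‖w₀‖ + 2) = ρ := by rw [hδdef]; field_simp
      have h7 : 0 ≤ ‖w₀‖ := norm_nonneg _
      nlinarith [hTIcc.1]
    obtain ⟨w₂, hw₂K, hw₂b⟩ := hS z hzball hzfr
    obtain ⟨τ, ω, hτpos, hτ0, hω, hmemK⟩ := hw₂K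
    have hw₂d : ‖w₂ - w₀‖ < ε₁/4 := by
      rw [mem_ball, dist_eq_norm] at hw₂b; exact hw₂b
    have hev1 : ∀ᶠ m in atTop, τ m < tt - T := hτ0.eventually (gt_mem_nhds (by linarith))
    have hev2 : ∀ᶠ m in atTop, ω m ∈ ball w₂ (ε₁/4) :=
      hω.eventually (Metric.ball_mem_nhds w₂ (by positivity))
    obtain ⟨m, hm1, hm2⟩ := (hev1.and hev2).exists
    have hωd : ‖w₂ - ω m‖ < ε₁/4 := by
      rw [mem_ball, dist_comm, dist_eq_norm] at hm2; exact hm2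
    have hbound : g (T + τ m) ≤ dist p z + τ m * ‖w₀ - ω m‖ := by
      have h8 : x + (T + τ m) • w₀ - (z + τ m • ω m) = (p - z) + τ m • (w₀ - ω m) := by
        rw [hp, add_smul, smul_sub]; abel
      calc g (T + τ m) ≤ dist (x + (T + τ m) • w₀) (z + τ m • ω m) :=
            infDist_le_dist_of_mem (hmemK m)
        _ = ‖(p - z) + τ m • (w₀ - ω m)‖ := by rw [dist_eq_norm, h8]
        _ ≤ ‖p - z‖ + ‖τ m • (w₀ - ω m)‖ := norm_add_le _ _
        _ = dist p z + τ m * ‖w₀ - ω m‖ := by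
            rw [← dist_eq_norm, norm_smul, Real.norm_eq_abs, abs_of_pos (hτpos m)]
    have h9 : ‖w₀ - ω m‖ ≤ ‖w₂ - w₀‖ + ‖w₂ - ω m‖ := by
      have : w₀ - ω m = -(w₂ - w₀) + (w₂ - ω m) := by abel
      rw [this]
      calc ‖-(w₂ - w₀) + (w₂ - ω m)‖ ≤ ‖-(w₂ - w₀)‖ + ‖w₂ - ω m‖ := norm_add_le _ _
        _ = ‖w₂ - w₀‖ + ‖w₂ - ω m‖ := by rw [norm_neg]
    have h10 := hAfter (T + τ m) (by linarith [hτpos m]) (by linarith)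
    nlinarith [hτpos m]

end Aux3b

section Aux3c

open Metric

/-- Limits of proximal normal directions (from outside points) give half-space bounds
on the (closure of the) contingent cone, by lower semicontinuity. -/
lemma halfspace_of_normals [ProperSpace E] {K : Set E} (hK : IsClosed K) {x : E} (hxK : x ∈ K)
    (hlsc : SVLowerSemicontinuousAt (contingentCone K) (𝓝[frontier K] x) x)
    (ζ b : ℕ → E) (hζ : ∀ k, ζ k ∉ K) (hbK : ∀ k, b k ∈ K)
    (hd : ∀ k, dist (ζ k) (b k) = infDist (ζ k) K)
    (hζx : Tendsto ζ atTop (𝓝 x)) {ν : E}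
    (hν1 : ‖ν‖ = 1)
    (hνt : Tendsto (fun k => (infDist (ζ k) K)⁻¹ • (ζ k - b k)) atTop (𝓝 ν)) :
    ∀ w ∈ closure (contingentCone K x), ⟪w, ν⟫ ≤ 0 := by
  have hbx : Tendsto b atTop (𝓝 x) := by
    rw [tendsto_iff_dist_tendsto_zero]
    have hbound : ∀ k, dist (b k) x ≤ 2 * dist (ζ k) x := by
      intro k
      have h1 : dist (b k) (ζ k) = infDist (ζ k) K := by rw [dist_comm]; exact hd k
      have h2 : infDist (ζ k) K ≤ dist (ζ k) x := infDist_le_dist_of_mem hxK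
      calc dist (b k) x ≤ dist (b k) (ζ k) + dist (ζ k) x := dist_triangle _ _ _
        _ ≤ 2 * dist (ζ k) x := by rw [h1]; linarith
    have h3 : Tendsto (fun k => dist (ζ k) x) atTop (𝓝 0) :=
      tendsto_iff_dist_tendsto_zero.mp hζx
    exact squeeze_zero (fun k => dist_nonneg) hbound (by simpa using h3.const_mul 2)
  have hbfr : ∀ k, b k ∈ frontier K := fun k => mem_frontier_of_nearest (hbK k) (hζ k) (hd k)
  have hbxF : Tendsto b atTop (𝓝[frontier K] x) :=
    tendsto_nhdsWithin_iff.mpr ⟨hbx, .of_forall hbfr⟩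
  -- step 1: the closure of the cone avoids the unit ball around ν
  have hAvoid : ∀ w ∈ closure (contingentCone K x), (1:ℝ) ≤ ‖w - ν‖ := by
    intro w hw; by_contra hlt; push_neg at hlt
    have hδ0 : 0 < (1 - ‖w - ν‖)/4 := by linarith
    set δ := (1 - ‖w - ν‖)/4 with hδdef
    obtain ⟨w₁, hw₁, hw₁d⟩ := Metric.mem_closure_iff.mp hw δ hδ0
    have hev := hlsc (ball w δ) isOpen_ball
      ⟨w₁, hw₁, by rw [mem_ball, dist_comm]; exact hw₁d⟩
    have hev2 := hbxF.eventually hev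
    have hev3 : ∀ᶠ k in atTop,
        (fun k => (infDist (ζ k) K)⁻¹ • (ζ k - b k)) k ∈ ball ν δ :=
      hνt.eventually (Metric.ball_mem_nhds ν hδ0)
    obtain ⟨k, ⟨w₂, hw₂K, hw₂b⟩, hνk⟩ := (hev2.and hev3).exists
    have hb1 : ‖w₂ - w‖ < δ := by rw [mem_ball, dist_eq_norm] at hw₂b; exact hw₂b
    have hb2 : ‖(infDist (ζ k) K)⁻¹ • (ζ k - b k) - ν‖ < δ := by
      rw [mem_ball, dist_eq_norm] at hνk; exact hνk
    have hx2 : ‖w₂ - (infDist (ζ k) K)⁻¹ • (ζ k - b k)‖ < 1 := by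
      have h4 : w₂ - (infDist (ζ k) K)⁻¹ • (ζ k - b k) =
          (w₂ - w) + (w - ν) - ((infDist (ζ k) K)⁻¹ • (ζ k - b k) - ν) := by abel
      calc ‖w₂ - (infDist (ζ k) K)⁻¹ • (ζ k - b k)‖
          ≤ ‖(w₂ - w) + (w - ν)‖ + ‖(infDist (ζ k) K)⁻¹ • (ζ k - b k) - ν‖ := by
            rw [h4]; exact norm_sub_le _ _
        _ ≤ ‖w₂ - w‖ + ‖w - ν‖ + ‖(infDist (ζ k) K)⁻¹ • (ζ k - b k) - ν‖ := by
            have := norm_add_le (w₂ - w) (w - ν); linarith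
        _ < δ + ‖w - ν‖ + δ := by linarith
        _ ≤ 1 := by rw [hδdef]; linarith
    exact normal_exclusion hK (hbK k) (hζ k) (hd k) hx2 hw₂K
  -- step 2: cone structure turns the avoided ball into a half-space bound
  intro w hw
  by_contra hpos; push_neg at hpos
  set l := ⟪w, ν⟫ / (‖w‖^2 + 1) with hldef
  have hl : 0 < l := div_pos hpos (by positivity)
  have h1 : (1:ℝ) ≤ ‖l • w - ν‖ := hAvoid _ (closure_contingentCone_smul_mem hw hl)
  have h2 : ‖l • w - ν‖^2 = l^2 * ‖w‖^2 - 2 * l * ⟪w, ν⟫ + 1 := by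
    rw [norm_sub_sq_real, real_inner_smul_left, norm_smul, Real.norm_eq_abs,
      abs_of_pos hl, mul_pow, hν1]
    ring
  have h4 : (1:ℝ) ≤ ‖l • w - ν‖^2 := by nlinarith [norm_nonneg (l • w - ν)]
  have h5 : 2 * l * ⟪w, ν⟫ ≤ l^2 * ‖w‖^2 := by nlinarith
  have h6 : l * (‖w‖^2 + 1) = ⟪w, ν⟫ := by rw [hldef]; field_simp
  nlinarith [h5, h6, hl, hpos, sq_nonneg l]

/-- If the closure of the cone contains the closed half-space of `u` and is bounded by the
half-space of `ν` (both unit), then `ν = -u`. -/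
lemma force_neg {u ν : E} (hu : ‖u‖ = 1) (hν : ‖ν‖ = 1) {T : Set E}
    (hHalf : ∀ w : E, 0 ≤ ⟪w, u⟫ → w ∈ T) (hB : ∀ w ∈ T, ⟪w, ν⟫ ≤ 0) : ν = -u := by
  have huu : ⟪u, u⟫ = (1:ℝ) := by
    rw [real_inner_self_eq_norm_sq, hu]; norm_num
  have hνν : ⟪ν, ν⟫ = (1:ℝ) := by
    rw [real_inner_self_eq_norm_sq, hν]; norm_num
  set α := ⟪ν, u⟫ with hα
  have hτu : ⟪ν - α • u, u⟫ = 0 := by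
    rw [inner_sub_left, real_inner_smul_left, huu]; ring
  have h1 : ⟪ν - α • u, ν⟫ ≤ 0 := hB _ (hHalf _ (le_of_eq hτu.symm))
  have hcomm : ⟪u, ν⟫ = α := by rw [hα]; exact (real_inner_comm u ν).symm
  have h2 : ⟪ν - α • u, ν⟫ = 1 - α^2 := by
    rw [inner_sub_left, real_inner_smul_left, hνν, hcomm]
    ring
  have hα2 : 1 ≤ α^2 := by rw [h2] at h1; linarith
  have hαle : α ≤ 0 := by
    have := hB u (hHalf u (by rw [huu]; norm_num))
    rw [real_inner_comm] at this; exact this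
  have hαm1 : α ≤ -1 := by nlinarith
  have h3 : ‖ν + u‖^2 = 2 + 2*α := by
    rw [norm_add_sq_real, hν, hu]; ring
  have h5 : ‖ν + u‖^2 = 0 := le_antisymm (by rw [h3]; linarith) (sq_nonneg _)
  have h6 : ν + u = 0 := by
    rw [pow_eq_zero_iff (two_ne_zero)] at h5
    exact norm_eq_zero.mp h5
  exact eq_neg_of_add_eq_zero_left h6

end Aux3c

section Aux3d

open Metric

set_option maxHeartbeats 1000000

/-- Marching away from `K` against the rigid normal direction: the clearance grows
at linear rate. -/
lemma march_up [ProperSpace E] {K : Set E} (hK : IsClosed K) {x : E} (hxK : x ∈ K)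
    {u : E} (hu : ‖u‖ = 1) {η : ℝ}
    (hR : ∀ ζ, ζ ∉ K → dist ζ x < η → ∀ b ∈ K, dist ζ b = infDist ζ K →
      ‖(infDist ζ K)⁻¹ • (ζ - b) + u‖ ≤ 1/2)
    {ζ₀ : E} (hζ₀ : ζ₀ ∉ K) {S : ℝ} (hS0 : 0 ≤ S) (hpath : dist ζ₀ x + S < η) :
    infDist ζ₀ K + S/2 ≤ infDist (ζ₀ - S • u) K := by
  set r₀ := infDist ζ₀ K with hr₀
  have hr₀0 : 0 < r₀ := (hK.notMem_iff_infDist_pos ⟨x, hxK⟩).mp hζ₀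
  set φ : ℝ → ℝ := fun s => infDist (ζ₀ - s • u) K with hφ
  have hφc : Continuous φ := (Metric.continuous_infDist_pt K).comp (by fun_prop)
  have hφlip : ∀ s s' : ℝ, φ s ≤ φ s' + |s - s'| := by
    intro s s'
    have h1 : dist (ζ₀ - s • u) (ζ₀ - s' • u) = |s - s'| := by
      rw [dist_eq_norm]
      have : ζ₀ - s • u - (ζ₀ - s' • u) = (s' - s) • u := by
        rw [sub_smul]; abel
      rw [this, norm_smul, Real.norm_eq_abs, hu, mul_one, abs_sub_comm]
    calc φ s ≤ φ s' + dist (ζ₀ - s • u) (ζ₀ - s' • u) := infDist_le_infDist_add_dist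
      _ = φ s' + |s - s'| := by rw [h1]
  by_contra hcon; push_neg at hcon
  have hφS : φ S < r₀ + S/2 := hcon
  set A := {s ∈ Icc (0:ℝ) S | r₀ + s/2 ≤ φ s} with hA
  have h0A : (0:ℝ) ∈ A := by
    refine ⟨⟨le_refl 0, hS0⟩, ?_⟩
    have : φ 0 = r₀ := by
      show infDist (ζ₀ - (0:ℝ) • u) K = r₀
      rw [zero_smul, sub_zero]
    rw [this]; linarith
  have hAcomp : IsCompact A := by
    apply isCompact_Icc.inter_right
    exact isClosed_le (by fun_prop) hφc
  have hTmem := hAcomp.sSup_mem ⟨0, h0A⟩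
  set T := sSup A with hT
  have hTIcc : T ∈ Icc (0:ℝ) S := hTmem.1
  have ha : r₀ + T/2 ≤ φ T := hTmem.2
  have hTS : T < S := by
    rcases lt_or_eq_of_le hTIcc.2 with h | h
    · exact h
    · exfalso; rw [h] at ha; linarith
  have hAfter : ∀ s, T < s → s ≤ S → φ s < r₀ + s/2 := by
    intro s h1 h2
    by_contra h; push_neg at h
    have : s ∈ A := ⟨⟨le_trans hTIcc.1 h1.le, h2⟩, h⟩
    exact absurd (le_csSup hAcomp.bddAbove this) (not_le.mpr h1)
  set a := φ T with hadef
  have ha0 : 0 < a := lt_of_lt_of_le (by linarith [hTIcc.1, hr₀0]) ha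
  set h := min (S - T) (a/5) / 2 with hhdef
  have hh0 : 0 < h := by
    have h1 : 0 < S - T := by linarith
    have h2 : 0 < a/5 := by linarith
    have := lt_min h1 h2
    positivity
  have hha : h ≤ a/10 := by
    have := min_le_right (S - T) (a/5); rw [hhdef]; linarith
  have hhS : T + h ≤ S := by
    have := min_le_left (S - T) (a/5); rw [hhdef]; linarith
  set ζ' := ζ₀ - (T + h) • u with hζ'
  set r' := infDist ζ' K with hr'
  have hφr : φ (T + h) = r' := rfl
  have hr'low : a - h ≤ r' := by
    have h2 := hφlip T (T + h)
    have habs : |T - (T + h)| = h := by rw [abs_sub_comm]; simp [abs_of_pos hh0]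
    rw [habs, hφr] at h2; linarith
  have hr'0 : 0 < r' := by linarith
  have hr'up : r' < a + h/2 := by
    have h2 := hAfter (T + h) (by linarith) hhS
    rw [hφr] at h2; linarith
  have hζ'K : ζ' ∉ K := by
    rw [hK.notMem_iff_infDist_pos ⟨x, hxK⟩]
    exact hr'0
  have hζ'x : dist ζ' x < η := by
    have h1 : dist ζ' ζ₀ = T + h := by
      rw [hζ', dist_eq_norm]
      have : ζ₀ - (T + h) • u - ζ₀ = -((T + h) • u) := by abel
      rw [this, norm_neg, norm_smul, Real.norm_eq_abs, hu, mul_one,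
        abs_of_nonneg (by linarith [hTIcc.1] : (0:ℝ) ≤ T + h)]
    calc dist ζ' x ≤ dist ζ' ζ₀ + dist ζ₀ x := dist_triangle _ _ _
      _ = dist ζ₀ x + (T + h) := by rw [h1]; ring
      _ ≤ dist ζ₀ x + S := by linarith
      _ < η := by linarith
  obtain ⟨b', hb'K, hb'd⟩ := hK.exists_infDist_eq_dist ⟨x, hxK⟩ ζ'
  have hb'd' : dist ζ' b' = r' := hb'd.symm
  have hRν := hR ζ' hζ'K hζ'x b' hb'K hb'd'
  set ν' := r'⁻¹ • (ζ' - b') with hν'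
  have hν'1 : ‖ν'‖ = 1 := by
    rw [hν', norm_smul, Real.norm_eq_abs, abs_of_pos (inv_pos.mpr hr'0),
      ← dist_eq_norm, hb'd']
    field_simp
  have hνu : ⟪ν', u⟫ ≤ -(7/8) := by
    have h1 : ‖ν' + u‖^2 = 2 + 2 * ⟪ν', u⟫ := by
      rw [norm_add_sq_real, hν'1, hu]; ring
    have h2 : ‖ν' + u‖ ≤ 1/2 := hRν
    nlinarith [norm_nonneg (ν' + u)]
  -- key estimate
  have hstep : a ≤ ‖(ζ' - b') + h • u‖ := by
    have h1 : ζ₀ - T • u = ζ' + h • u := by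
      rw [hζ', add_smul]; abel
    have h2 : ζ₀ - T • u - b' = (ζ' - b') + h • u := by rw [h1]; abel
    calc a = infDist (ζ₀ - T • u) K := rfl
      _ ≤ dist (ζ₀ - T • u) b' := infDist_le_dist_of_mem hb'K
      _ = ‖(ζ' - b') + h • u‖ := by rw [dist_eq_norm, h2]
  have hsq : a^2 ≤ r'^2 - (7/4) * h * r' + h^2 := by
    have h1 : ‖(ζ' - b') + h • u‖^2 = r'^2 + 2 * h * ⟪ζ' - b', u⟫ + h^2 := by
      rw [norm_add_sq_real, norm_smul, Real.norm_eq_abs, abs_of_pos hh0, hu, mul_one,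
        real_inner_smul_right]
      have : ‖ζ' - b'‖ = r' := by rw [← dist_eq_norm, hb'd']
      rw [this]; ring
    have h2 : ⟪ζ' - b', u⟫ = r' * ⟪ν', u⟫ := by
      have h3 : ζ' - b' = r' • ν' := by
        rw [hν', smul_smul, mul_inv_cancel₀ hr'0.ne', one_smul]
      rw [h3, real_inner_smul_left]
    have h4 : a^2 ≤ ‖(ζ' - b') + h • u‖^2 := by nlinarith [norm_nonneg ((ζ' - b') + h • u), ha0]
    rw [h1, h2] at h4
    have e0 : r' * ⟪ν', u⟫ ≤ r' * (-(7/8)) := mul_le_mul_of_nonneg_left hνu hr'0.le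
    have e1 : 2 * h * (r' * ⟪ν', u⟫) ≤ 2 * h * (r' * (-(7/8))) :=
      mul_le_mul_of_nonneg_left e0 (by linarith)
    linarith [h4, e1]
  clear_value ν' r' ζ' h a T A φ r₀
  have e2 : (0:ℝ) ≤ r' := hr'0.le
  have e3 : r'^2 ≤ a^2 + a*h + h^2/4 := by nlinarith [hr'up.le, e2]
  have e4 : (7/4)*h*(a - h) ≤ (7/4)*h*r' := by
    have := mul_le_mul_of_nonneg_left hr'low (by linarith : (0:ℝ) ≤ (7/4)*h)
    linarith [this]
  have e5 : (3/4)*a*h ≤ 3*h^2 := by nlinarith [hsq, e3, e4]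
  have e6 : a ≤ 4*h := by nlinarith [e5, hh0]
  linarith [hha, ha0, e6]

end Aux3d

set_option maxHeartbeats 1600000 in
/-- Under property (Pr), `T^a_{∂K}(x) = T_{∂K}(x)` for all `x ∈ 𝒫`. -/
theorem adjacent_eq_contingent_on_critSet {n : ℕ} (K C : Set (Euc n))
    (hK : IsClosed K) (hC : IsClosed C)
    (hPrCont : ∀ x ∈ critSet K C,
      SVContinuousAt (contingentCone K) (𝓝[frontier K] x) x)
    (hPrDense : ∀ x ∈ critSet K C, ∀ N ∈ 𝓝 x,
      (N ∩ (frontier K ∩ interior C)).Nonempty) :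
    ∀ x ∈ critSet K C, adjacentCone (frontier K) x = contingentCone (frontier K) x := by
  intro x hx
  have hxFK : x ∈ frontier K := hx.1.1
  have hxCK : ∀ N ∈ 𝓝 x, (N ∩ (C \ K)).Nonempty := hx.2
  have hxK : x ∈ K := hK.frontier_subset hxFK
  have hxc : x ∈ closure Kᶜ := by
    have h := hxFK; rw [frontier_eq_closure_inter_closure] at h; exact h.2
  have hFKcl : IsClosed (frontier K) := isClosed_frontier
  have hFKne : (frontier K).Nonempty := ⟨x, hxFK⟩
  obtain ⟨hlsc, husc⟩ := hPrCont x hx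
  have honet : Tendsto (fun i : ℕ => 1 / ((i:ℝ) + 1)) atTop (𝓝 0) :=
    tendsto_one_div_add_atTop_nhds_zero_nat
  apply Set.Subset.antisymm
  · -- adjacent ⊆ contingent
    intro v hv
    obtain ⟨w, hwt, hwm⟩ := hv (fun i : ℕ => 1 / ((i:ℝ) + 1)) (fun i => by positivity) honet
    exact ⟨_, w, fun i => by positivity, honet, hwt, hwm⟩
  · -- contingent ⊆ adjacent
    intro v hv
    have hKEY : ∀ ε' : ℝ, 0 < ε' →
        ∀ᶠ s in 𝓝[>] (0:ℝ), Metric.infDist (x + s • v) (frontier K) ≤ ε' * s := by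
      intro ε' hε'
      by_contra hnot
      rw [Filter.not_eventually] at hnot
      -- ============ THE CORE CONTRADICTION ============
      set ε : ℝ := ε' / 3 with hεdef
      have hε : 0 < ε := by positivity
      have hvK : v ∈ contingentCone K x := contingentCone_mono hK.frontier_subset x hv
      have hvT : v ∈ closure (contingentCone K x) := subset_closure hvK
      obtain ⟨δ₁, hδ₁0, hM1⟩ := march_tangent hK hxK hlsc hvT (show (0:ℝ) < ε'/6 by positivity)
      -- choose scales with deep violation
      have hchoose : ∀ i : ℕ, ∃ s : ℝ, s ∈ Ioo 0 (min (1/((i:ℝ)+1)) δ₁) ∧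
          ε' * s < Metric.infDist (x + s • v) (frontier K) := by
        intro i
        have hmin : (0:ℝ) < min (1/((i:ℝ)+1)) δ₁ := lt_min (by positivity) hδ₁0
        obtain ⟨s, hs1, hs2⟩ := Filter.frequently_iff.mp hnot
          (Ioo_mem_nhdsGT_of_mem ⟨le_refl 0, hmin⟩)
        exact ⟨s, hs1, not_le.mp hs2⟩
      choose tt htt1 htt2 using hchoose
      have httpos : ∀ i, 0 < tt i := fun i => (htt1 i).1
      have httδ₁ : ∀ i, tt i ≤ δ₁ := fun i => le_trans (htt1 i).2.le (min_le_right _ _)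
      have htt0 : Tendsto tt atTop (𝓝 0) := by
        apply squeeze_zero (fun i => (httpos i).le)
          (fun i => le_trans (htt1 i).2.le (min_le_left _ _)) honet
      -- distance to the complement closure is bounded below
      have hKccl : IsClosed (closure Kᶜ) := isClosed_closure
      have hdlow : ∀ i, ε * tt i ≤ Metric.infDist (x + tt i • v) (closure Kᶜ) := by
        intro i
        by_contra hlt; push_neg at hlt
        have hKd : Metric.infDist (x + tt i • v) K ≤ (ε'/6) * tt i :=
          hM1 _ (httpos i) (httδ₁ i)
        obtain ⟨a, haK, had⟩ := hK.exists_infDist_eq_dist ⟨x, hxK⟩ (x + tt i • v)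
        obtain ⟨bb, hbb, hbd⟩ := hKccl.exists_infDist_eq_dist ⟨x, hxc⟩ (x + tt i • v)
        have hviol := htt2 i
        by_cases hbbK : bb ∈ K
        · have hbfr : bb ∈ frontier K := by
            rw [frontier_eq_closure_inter_closure]; exact ⟨subset_closure hbbK, hbb⟩
          have h1 : Metric.infDist (x + tt i • v) (frontier K) ≤ dist (x + tt i • v) bb :=
            Metric.infDist_le_dist_of_mem hbfr
          rw [← hbd] at h1
          have : ε * tt i ≤ ε' * tt i := by
            have := (httpos i).le; rw [hεdef]; nlinarith
          linarith
        · obtain ⟨z, hzF, hzd⟩ := segment_frontier hK haK hbbK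
          have h1 : Metric.infDist (x + tt i • v) (frontier K) ≤ dist (x + tt i • v) z :=
            Metric.infDist_le_dist_of_mem hzF
          have h2 : dist (x + tt i • v) z ≤ dist (x + tt i • v) bb + dist bb z :=
            dist_triangle _ _ _
          have h3 : dist bb z ≤ dist bb a := hzd
          have h4 : dist bb a ≤ dist bb (x + tt i • v) + dist (x + tt i • v) a :=
            dist_triangle _ _ _
          have h5 : dist bb (x + tt i • v) = Metric.infDist (x + tt i • v) (closure Kᶜ) := by
            rw [dist_comm]; exact hbd.symm
          rw [← hbd, ← had] at *
          rw [hεdef] at hlt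
          nlinarith [h1, h2, h3, h4, h5, hlt, hKd, hviol, mul_pos hε' (httpos i)]
      -- positivity of clearance, nearest points on the complement side
      have hdpos : ∀ i, 0 < Metric.infDist (x + tt i • v) (closure Kᶜ) :=
        fun i => lt_of_lt_of_le (mul_pos hε (httpos i)) (hdlow i)
      have hpnot : ∀ i, (x + tt i • v) ∉ closure Kᶜ := fun i =>
        (hKccl.notMem_iff_infDist_pos ⟨x, hxc⟩).mpr (hdpos i)
      have hnearc : ∀ i, ∃ zc ∈ closure Kᶜ,
          Metric.infDist (x + tt i • v) (closure Kᶜ) = dist (x + tt i • v) zc :=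
        fun i => hKccl.exists_infDist_eq_dist ⟨x, hxc⟩ _
      choose zz hzz1 hzz2 using hnearc
      set d : ℕ → ℝ := fun i => Metric.infDist (x + tt i • v) (closure Kᶜ) with hddef
      have hzfr : ∀ i, zz i ∈ frontier K := by
        intro i
        have h1 : zz i ∈ frontier (closure Kᶜ) :=
          mem_frontier_of_nearest (hzz1 i) (hpnot i) (hzz2 i).symm
        have h2 := frontier_closure_subset h1
        rwa [frontier_compl] at h2
      have hdup : ∀ i, d i ≤ tt i * ‖v‖ := by
        intro i
        have h1 : d i ≤ dist (x + tt i • v) x := Metric.infDist_le_dist_of_mem hxc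
        have h2 : dist (x + tt i • v) x = tt i * ‖v‖ := by
          rw [dist_eq_norm]
          have h3 : x + tt i • v - x = tt i • v := by abel
          rw [h3, norm_smul, Real.norm_eq_abs, abs_of_pos (httpos i)]
        linarith
      set u : ℕ → Euc n := fun i => (d i)⁻¹ • (x + tt i • v - zz i) with hudef
      have hdu : ∀ i, (d i) • u i = x + tt i • v - zz i := by
        intro i
        show (d i) • ((d i)⁻¹ • (x + tt i • v - zz i)) = _
        rw [smul_smul, mul_inv_cancel₀ (hdpos i).ne', one_smul]
      have hu1 : ∀ i, ‖u i‖ = 1 := by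
        intro i
        show ‖(d i)⁻¹ • (x + tt i • v - zz i)‖ = 1
        rw [norm_smul, Real.norm_eq_abs, abs_of_pos (inv_pos.mpr (hdpos i)),
          ← dist_eq_norm, ← hzz2 i]
        exact inv_mul_cancel₀ (hdpos i).ne'
      have hInward : ∀ i, ∀ w : Euc n, ‖w - u i‖ < 1 → w ∈ contingentCone K (zz i) := by
        intro i w hw
        have hmemK : ∀ τ : ℝ, 0 < τ → τ ≤ d i → zz i + τ • w ∈ K := by
          intro τ hτ0 hτd
          by_contra hq
          have hqc : zz i + τ • w ∈ closure Kᶜ := subset_closure hq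
          have h1 : d i ≤ dist (x + tt i • v) (zz i + τ • w) :=
            Metric.infDist_le_dist_of_mem hqc
          have h2 : x + tt i • v - (zz i + τ • w) = τ • (u i - w) + (d i - τ) • u i := by
            calc x + tt i • v - (zz i + τ • w)
                = (x + tt i • v - zz i) - τ • w := by abel
              _ = d i • u i - τ • w := by rw [hdu i]
              _ = τ • (u i - w) + (d i - τ) • u i := by rw [smul_sub, sub_smul]; abel
          have h4 : dist (x + tt i • v) (zz i + τ • w) ≤ τ * ‖u i - w‖ + (d i - τ) := by
            rw [dist_eq_norm, h2]
            calc ‖τ • (u i - w) + (d i - τ) • u i‖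
                ≤ ‖τ • (u i - w)‖ + ‖(d i - τ) • u i‖ := norm_add_le _ _
              _ = τ * ‖u i - w‖ + (d i - τ) := by
                  rw [norm_smul, norm_smul, Real.norm_eq_abs (τ), Real.norm_eq_abs,
                    abs_of_pos hτ0, abs_of_nonneg (by linarith : (0:ℝ) ≤ d i - τ),
                    hu1 i, mul_one]
          have h5 : τ * ‖u i - w‖ < τ * 1 := by
            apply mul_lt_mul_of_pos_left _ hτ0
            rw [norm_sub_rev]; exact hw
          linarith
        refine ⟨fun m => d i / ((m:ℝ)+1), fun _ => w,
          fun m => div_pos (hdpos i) (by positivity), ?_,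
          tendsto_const_nhds, fun m => hmemK _ (div_pos (hdpos i) (by positivity)) ?_⟩
        · have : (fun m : ℕ => d i / ((m:ℝ)+1)) = fun m : ℕ => d i * (1/((m:ℝ)+1)) := by
            funext m; ring
          rw [this]
          simpa using honet.const_mul (d i)
        · apply div_le_self (hdpos i).le
          have : (0:ℝ) ≤ (_root_.id m : ℝ) := Nat.cast_nonneg m
          linarith [Nat.cast_nonneg (α := ℝ) m]
      -- subsequences: directions and ratios converge
      have husp : ∀ i, u i ∈ Metric.sphere (0 : Euc n) 1 := fun i => by
        rw [mem_sphere_zero_iff_norm]; exact hu1 i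
      obtain ⟨uo, huomem, φ₁, hφ₁, huot⟩ := (isCompact_sphere (0:Euc n) 1).tendsto_subseq husp
      have huo1 : ‖uo‖ = 1 := mem_sphere_zero_iff_norm.mp huomem
      have hρmem : ∀ j, d (φ₁ j) / tt (φ₁ j) ∈ Icc ε ‖v‖ := by
        intro j
        constructor
        · rw [le_div_iff₀ (httpos _)]; exact hdlow (φ₁ j)
        · rw [div_le_iff₀ (httpos _)]
          have := hdup (φ₁ j); linarith
      obtain ⟨ρ, hρIcc, φ₂, hφ₂, hρt⟩ :=
        (isCompact_Icc (a := ε) (b := ‖v‖)).tendsto_subseq hρmem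
      set ψ : ℕ → ℕ := φ₁ ∘ φ₂ with hψdef
      have hψmono : StrictMono ψ := hφ₁.comp hφ₂
      have huψ : Tendsto (fun j => u (ψ j)) atTop (𝓝 uo) := huot.comp hφ₂.tendsto_atTop
      have hρψ : Tendsto (fun j => d (ψ j) / tt (ψ j)) atTop (𝓝 ρ) := hρt
      have httψ0 : Tendsto (fun j => tt (ψ j)) atTop (𝓝 0) := htt0.comp hψmono.tendsto_atTop
      have hzψx : Tendsto (fun j => zz (ψ j)) atTop (𝓝[frontier K] x) := by
        rw [tendsto_nhdsWithin_iff]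
        constructor
        · rw [tendsto_iff_dist_tendsto_zero]
          apply squeeze_zero (fun j => dist_nonneg) (g := fun j => 2 * tt (ψ j) * ‖v‖)
          · intro j
            have h1 : dist (zz (ψ j)) (x + tt (ψ j) • v) = d (ψ j) := by
              rw [dist_comm]; exact (hzz2 (ψ j)).symm
            have h2 : dist (x + tt (ψ j) • v) x = tt (ψ j) * ‖v‖ := by
              rw [dist_eq_norm]
              have h3 : x + tt (ψ j) • v - x = tt (ψ j) • v := by abel
              rw [h3, norm_smul, Real.norm_eq_abs, abs_of_pos (httpos _)]
            calc dist (zz (ψ j)) x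
                ≤ dist (zz (ψ j)) (x + tt (ψ j) • v) + dist (x + tt (ψ j) • v) x :=
                  dist_triangle _ _ _
              _ ≤ 2 * tt (ψ j) * ‖v‖ := by
                  rw [h1, h2]; have := hdup (ψ j); linarith
          · have : Tendsto (fun j => 2 * tt (ψ j)) atTop (𝓝 (2 * 0)) := httψ0.const_mul 2
            simpa using this.mul_const ‖v‖
        · exact Filter.Eventually.of_forall (fun j => hzfr (ψ j))
      -- upper semicontinuity puts the unit ball around uo inside the closed cone
      have hBall : ∀ w : Euc n, ‖w - uo‖ < 1 → w ∈ closure (contingentCone K x) := by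
        intro w hw
        by_contra hnotc
        have hnc : ∃ rr > 0, ∀ y ∈ contingentCone K x, ¬ dist w y < rr := by
          by_contra hh; push_neg at hh
          exact hnotc (Metric.mem_closure_iff.mpr (fun εx hεx => hh εx hεx))
        obtain ⟨rr, hrr0, hrr⟩ := hnc
        have hUopen : IsOpen (Metric.closedBall w (rr/2))ᶜ :=
          Metric.isClosed_closedBall.isOpen_compl
        have hUsub : contingentCone K x ⊆ (Metric.closedBall w (rr/2))ᶜ := by
          intro y hy hmem
          rw [Metric.mem_closedBall] at hmem
          have h1 := hrr y hy
          rw [dist_comm] at hmem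
          exact h1 (by linarith)
        have hev := husc _ hUopen hUsub
        have hev2 := hzψx.eventually hev
        have hev3 : ∀ᶠ j in atTop, dist (u (ψ j)) uo < 1 - ‖w - uo‖ :=
          huψ.eventually (Metric.ball_mem_nhds uo (by linarith))
        obtain ⟨j, hj1, hj2⟩ := (hev2.and hev3).exists
        have hwu : ‖w - u (ψ j)‖ < 1 := by
          have h1 : w - u (ψ j) = (w - uo) + (uo - u (ψ j)) := by abel
          have h2 : ‖uo - u (ψ j)‖ < 1 - ‖w - uo‖ := by
            rw [← dist_eq_norm, dist_comm]; exact hj2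
          calc ‖w - u (ψ j)‖ ≤ ‖w - uo‖ + ‖uo - u (ψ j)‖ := by rw [h1]; exact norm_add_le _ _
            _ < 1 := by linarith
        have hmem2 : w ∈ contingentCone K (zz (ψ j)) := hInward _ _ hwu
        have := hj1 hmem2
        apply this
        rw [Metric.mem_closedBall, dist_self]
        positivity
      -- the closed half space of uo is inside the closed cone
      have hHalfCl : ∀ w : Euc n, 0 ≤ ⟪w, uo⟫ → w ∈ closure (contingentCone K x) := by
        have hHalfOpen : ∀ w : Euc n, 0 < ⟪w, uo⟫ → w ∈ closure (contingentCone K x) := by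
          intro w hw
          set l := ⟪w, uo⟫ / (‖w‖^2 + 1) with hldef
          have hl0 : 0 < l := div_pos hw (by positivity)
          have hlw : ‖l • w - uo‖ < 1 := by
            have h1 : ‖l • w - uo‖^2 = l^2*‖w‖^2 - 2*l*⟪w, uo⟫ + 1 := by
              rw [norm_sub_sq_real, real_inner_smul_left, norm_smul, Real.norm_eq_abs,
                abs_of_pos hl0, mul_pow, huo1]
              ring
            have h2 : l * (‖w‖^2 + 1) = ⟪w, uo⟫ := by rw [hldef]; field_simp
            have h3 : ‖l • w - uo‖^2 < 1 := by nlinarith [hl0, hw, h2, h1]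
            nlinarith [norm_nonneg (l • w - uo), h3]
          have h5 := hBall _ hlw
          have h6 := closure_contingentCone_smul_mem h5 (inv_pos.mpr hl0)
          rwa [smul_smul, inv_mul_cancel₀ hl0.ne', one_smul] at h6
        intro w hw
        rcases eq_or_lt_of_le hw with h | h
        · have hseq : ∀ k : ℕ, w + (1/((k:ℝ)+1)) • uo ∈ closure (contingentCone K x) := by
            intro k
            apply hHalfOpen
            rw [inner_add_left, real_inner_smul_left, real_inner_self_eq_norm_sq, huo1, ← h]
            norm_num
            positivity
          have htendw : Tendsto (fun k : ℕ => w + (1/((k:ℝ)+1)) • uo) atTop (𝓝 w) := by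
            have h1 : Tendsto (fun k : ℕ => (1/((k:ℝ)+1)) • uo) atTop (𝓝 ((0:ℝ) • uo)) :=
              honet.smul_const uo
            rw [zero_smul] at h1
            have h3 := (tendsto_const_nhds : Tendsto (fun _ : ℕ => w) atTop (𝓝 w)).add h1
            simpa using h3
          exact isClosed_closure.mem_of_tendsto htendw (Filter.Eventually.of_forall hseq)
        · exact hHalfOpen w h
      -- any outside sequence tending to x forces normal limit -uo
      have hnorm : ∀ (ζs bs : ℕ → Euc n), (∀ k, ζs k ∉ K) → (∀ k, bs k ∈ K) →
          (∀ k, dist (ζs k) (bs k) = Metric.infDist (ζs k) K) →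
          Tendsto ζs atTop (𝓝 x) →
          ∃ ν : Euc n, ‖ν‖ = 1 ∧ (∀ w ∈ closure (contingentCone K x), ⟪w, ν⟫ ≤ 0) ∧
            ν = -uo ∧ ∃ σ : ℕ → ℕ, StrictMono σ ∧
            Tendsto (fun k => (Metric.infDist (ζs (σ k)) K)⁻¹ • (ζs (σ k) - bs (σ k)))
              atTop (𝓝 ν) := by
        intro ζs bs h1 h2 h3 h4
        have hsp : ∀ k, (Metric.infDist (ζs k) K)⁻¹ • (ζs k - bs k) ∈
            Metric.sphere (0:Euc n) 1 := by
          intro k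
          have hr0 : 0 < Metric.infDist (ζs k) K :=
            (hK.notMem_iff_infDist_pos ⟨x, hxK⟩).mp (h1 k)
          rw [mem_sphere_zero_iff_norm, norm_smul, Real.norm_eq_abs,
            abs_of_pos (inv_pos.mpr hr0), ← dist_eq_norm, h3 k]
          field_simp
        obtain ⟨ν, hνmem, σ, hσ, hνt⟩ := (isCompact_sphere (0:Euc n) 1).tendsto_subseq hsp
        have hν1 : ‖ν‖ = 1 := mem_sphere_zero_iff_norm.mp hνmem
        have hB := halfspace_of_normals hK hxK hlsc (fun k => ζs (σ k)) (fun k => bs (σ k))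
          (fun k => h1 (σ k)) (fun k => h2 (σ k)) (fun k => h3 (σ k))
          (h4.comp hσ.tendsto_atTop) hν1 hνt
        exact ⟨ν, hν1, hB, force_neg huo1 hν1 hHalfCl hB, σ, hσ, hνt⟩
      -- (a) the actual outside sequence from the critical-point property
      have houts : ∀ k : ℕ, ∃ ζ : Euc n, ζ ∉ K ∧ dist ζ x < 1/((k:ℝ)+1) := by
        intro k
        obtain ⟨ζ, hζ1⟩ := hxCK (Metric.ball x (1/((k:ℝ)+1)))
          (Metric.ball_mem_nhds x (by positivity))
        exact ⟨ζ, hζ1.2.2, Metric.mem_ball.mp hζ1.1⟩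
      choose ζa hζaK hζad using houts
      have hζax : Tendsto ζa atTop (𝓝 x) := by
        rw [tendsto_iff_dist_tendsto_zero]
        exact squeeze_zero (fun k => dist_nonneg) (fun k => (hζad k).le) honet
      have hbaex : ∀ k, ∃ b ∈ K, Metric.infDist (ζa k) K = dist (ζa k) b :=
        fun k => hK.exists_infDist_eq_dist ⟨x, hxK⟩ (ζa k)
      choose ba hba1 hba2 using hbaex
      obtain ⟨ν₀, hν₀1, hBound, hν₀eq, _, _, _⟩ :=
        hnorm ζa ba hζaK hba1 (fun k => (hba2 k).symm) hζax
      have hTsub : ∀ w ∈ closure (contingentCone K x), 0 ≤ ⟪w, uo⟫ := by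
        intro w hw
        have h1 := hBound w hw
        rw [hν₀eq, inner_neg_right] at h1
        linarith
      -- the tilted vector and ⟪v, uo⟫ ≥ ε
      have htldmem : (v - ρ • uo) ∈ contingentCone (frontier K) x := by
        refine ⟨fun j => tt (ψ j), fun j => (tt (ψ j))⁻¹ • (zz (ψ j) - x),
          fun j => httpos _, httψ0, ?_, ?_⟩
        · have hid : ∀ j, (tt (ψ j))⁻¹ • (zz (ψ j) - x) =
              v - (d (ψ j) / tt (ψ j)) • u (ψ j) := by
            intro j
            have h1 : zz (ψ j) - x = tt (ψ j) • v - d (ψ j) • u (ψ j) := by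
              rw [hdu (ψ j)]; abel
            rw [h1, smul_sub, smul_smul, inv_mul_cancel₀ (httpos _).ne', one_smul,
              smul_smul, ← div_eq_inv_mul]
          have h2 : Tendsto (fun j => v - (d (ψ j) / tt (ψ j)) • u (ψ j)) atTop
              (𝓝 (v - ρ • uo)) := tendsto_const_nhds.sub (hρψ.smul huψ)
          exact h2.congr (fun j => (hid j).symm)
        · intro j
          have h1 : x + tt (ψ j) • ((tt (ψ j))⁻¹ • (zz (ψ j) - x)) = zz (ψ j) := by
            rw [smul_smul, mul_inv_cancel₀ (httpos _).ne', one_smul]; abel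
          rw [h1]; exact hzfr (ψ j)
      have hvu : ε ≤ ⟪v, uo⟫ := by
        have h1 : (v - ρ • uo) ∈ closure (contingentCone K x) :=
          subset_closure (contingentCone_mono hK.frontier_subset x htldmem)
        have h2 := hTsub _ h1
        rw [inner_sub_left, real_inner_smul_left, real_inner_self_eq_norm_sq, huo1] at h2
        have h3 := hρIcc.1
        nlinarith [h2, h3]
      -- rigidity of proximal normals near x
      have hRig : ∃ η > 0, ∀ ζ : Euc n, ζ ∉ K → dist ζ x < η → ∀ b ∈ K,
          dist ζ b = Metric.infDist ζ K →
          ‖(Metric.infDist ζ K)⁻¹ • (ζ - b) + uo‖ ≤ 1/2 := by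
        by_contra hcon; push_neg at hcon
        have hbad : ∀ k : ℕ, ∃ ζ : Euc n, ζ ∉ K ∧ dist ζ x < 1/((k:ℝ)+1) ∧ ∃ b,
            b ∈ K ∧ dist ζ b = Metric.infDist ζ K ∧
            1/2 < ‖(Metric.infDist ζ K)⁻¹ • (ζ - b) + uo‖ := by
          intro k
          obtain ⟨ζ, h1, h2, b, h3, h4, h5⟩ := hcon (1/((k:ℝ)+1)) (by positivity)
          exact ⟨ζ, h1, h2, b, h3, h4, h5⟩
        choose ζb h1b h2b bb' h3b h4b h5b using hbad
        have hζbx : Tendsto ζb atTop (𝓝 x) := by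
          rw [tendsto_iff_dist_tendsto_zero]
          exact squeeze_zero (fun k => dist_nonneg) (fun k => (h2b k).le) honet
        obtain ⟨ν₁, hν₁1, _, hν₁eq, σ, hσ, hνt₁⟩ := hnorm ζb bb' h1b h3b h4b hζbx
        have hlim : Tendsto (fun k =>
            ‖(Metric.infDist (ζb (σ k)) K)⁻¹ • (ζb (σ k) - bb' (σ k)) + uo‖) atTop
            (𝓝 ‖ν₁ + uo‖) := (hνt₁.add tendsto_const_nhds).norm
        have hz : ‖ν₁ + uo‖ = 0 := by rw [hν₁eq]; simp
        rw [hz] at hlim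
        have hev := hlim.eventually (gt_mem_nhds (show (0:ℝ) < 1/2 by norm_num))
        obtain ⟨k, hk⟩ := hev.exists
        exact absurd hk (not_lt.mpr (h5b (σ k)).le)
      obtain ⟨η, hη0, hR⟩ := hRig
      -- final contradiction
      obtain ⟨ss, vv, hsspos, hss0, hvvt, hssmem⟩ := hv
      have hwstar : (v - (ε/2) • uo) ∈ closure (contingentCone K x) := by
        apply hHalfCl
        rw [inner_sub_left, real_inner_smul_left, real_inner_self_eq_norm_sq, huo1]
        nlinarith [hvu, hε]
      obtain ⟨δ₂, hδ₂0, hM2⟩ := march_tangent hK hxK hlsc hwstar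
        (show (0:ℝ) < ε/16 by positivity)
      have houtj : ∀ j : ℕ, ∃ ζ : Euc n, ζ ∉ K ∧
          dist (x + ss j • vv j) ζ < ss j * (1/((j:ℝ)+1)) := by
        intro j
        have h1 : x + ss j • vv j ∈ closure Kᶜ := by
          have h2 := hssmem j
          rw [frontier_eq_closure_inter_closure] at h2
          exact h2.2
        obtain ⟨ζ, hζ1, hζ2⟩ := Metric.mem_closure_iff.mp h1 (ss j * (1/((j:ℝ)+1)))
          (mul_pos (hsspos j) (by positivity))
        exact ⟨ζ, hζ1, hζ2⟩
      choose ζc hζcK hζcd using houtj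
      have hvvnorm : ∀ᶠ j in atTop, ‖vv j - v‖ ≤ ε/16 := by
        have := hvvt.eventually (Metric.closedBall_mem_nhds v (show (0:ℝ) < ε/16 by positivity))
        filter_upwards [this] with j hj
        have h2 : dist (vv j) v ≤ ε/16 := hj
        rwa [dist_eq_norm] at h2
      have hssδ : ∀ᶠ j in atTop, ss j ≤ δ₂ := by
        filter_upwards [hss0.eventually (gt_mem_nhds hδ₂0)] with j hj using hj.le
      have hjsmall : ∀ᶠ j : ℕ in atTop, (1:ℝ)/((j:ℝ)+1) ≤ ε/16 := by
        filter_upwards [honet.eventually (gt_mem_nhds (show (0:ℝ) < ε/16 by positivity))]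
          with j hj using hj.le
      have hpathball : ∀ᶠ j in atTop, dist (ζc j) x + (ε/2) * ss j < η := by
        have hb1 : ∀ j, dist (ζc j) x ≤ ss j * (1/((j:ℝ)+1)) + ss j * ‖vv j‖ := by
          intro j
          have h2 : dist (x + ss j • vv j) x = ss j * ‖vv j‖ := by
            rw [dist_eq_norm]
            have h3 : x + ss j • vv j - x = ss j • vv j := by abel
            rw [h3, norm_smul, Real.norm_eq_abs, abs_of_pos (hsspos j)]
          have h4 := hζcd j
          calc dist (ζc j) x
              ≤ dist (ζc j) (x + ss j • vv j) + dist (x + ss j • vv j) x :=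
                dist_triangle _ _ _
            _ ≤ ss j * (1/((j:ℝ)+1)) + ss j * ‖vv j‖ := by
                rw [dist_comm] at h4; rw [h2]; linarith
        have htendN : Tendsto
            (fun j => ss j * (1/((j:ℝ)+1)) + ss j * ‖vv j‖ + (ε/2) * ss j) atTop (𝓝 0) := by
          have t1 : Tendsto (fun j => ss j * (1/((j:ℝ)+1))) atTop (𝓝 (0*0)) :=
            hss0.mul honet
          have t2 : Tendsto (fun j => ss j * ‖vv j‖) atTop (𝓝 (0 * ‖v‖)) :=
            hss0.mul hvvt.norm
          have t3 : Tendsto (fun j => (ε/2) * ss j) atTop (𝓝 ((ε/2) * 0)) :=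
            hss0.const_mul (ε/2)
          have := (t1.add t2).add t3
          simpa using this
        filter_upwards [htendN.eventually (gt_mem_nhds hη0)] with j hj
        have := hb1 j
        linarith
      obtain ⟨j, hjδ, hjvv, hjsm, hjpath⟩ :=
        (hssδ.and (hvvnorm.and (hjsmall.and hpathball))).exists
      have hmu := march_up hK hxK huo1 hR (hζcK j)
        (show (0:ℝ) ≤ (ε/2) * ss j from mul_nonneg (by linarith) (hsspos j).le) hjpath
      have hlow2 : (ε/4) * ss j ≤ Metric.infDist (ζc j - ((ε/2) * ss j) • uo) K := by
        have h0 : 0 ≤ Metric.infDist (ζc j) K := Metric.infDist_nonneg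
        linarith [hmu]
      have hup2 : Metric.infDist (ζc j - ((ε/2) * ss j) • uo) K ≤
          (ε/16) * ss j + (ss j * (1/((j:ℝ)+1)) + ss j * ‖vv j - v‖) := by
        have h1 : Metric.infDist (x + ss j • (v - (ε/2) • uo)) K ≤ (ε/16) * ss j := by
          have := hM2 (ss j) (hsspos j) hjδ
          linarith
        have h3 : ζc j - ((ε/2) * ss j) • uo - (x + ss j • (v - (ε/2) • uo)) =
            (ζc j - (x + ss j • vv j)) + ss j • (vv j - v) := by
          rw [smul_sub, smul_sub, smul_smul, mul_comm (ss j) (ε/2)]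
          abel
        have h2 : dist (ζc j - ((ε/2) * ss j) • uo) (x + ss j • (v - (ε/2) • uo)) ≤
            ss j * (1/((j:ℝ)+1)) + ss j * ‖vv j - v‖ := by
          rw [dist_eq_norm, h3]
          have h4 : ‖ζc j - (x + ss j • vv j)‖ ≤ ss j * (1/((j:ℝ)+1)) := by
            rw [← dist_eq_norm, dist_comm]
            exact (hζcd j).le
          have h5 : ‖ss j • (vv j - v)‖ = ss j * ‖vv j - v‖ := by
            rw [norm_smul, Real.norm_eq_abs, abs_of_pos (hsspos j)]
          calc ‖(ζc j - (x + ss j • vv j)) + ss j • (vv j - v)‖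
              ≤ ‖ζc j - (x + ss j • vv j)‖ + ‖ss j • (vv j - v)‖ := norm_add_le _ _
            _ ≤ ss j * (1/((j:ℝ)+1)) + ss j * ‖vv j - v‖ := by rw [h5] at *; linarith
        calc Metric.infDist (ζc j - ((ε/2) * ss j) • uo) K
            ≤ Metric.infDist (x + ss j • (v - (ε/2) • uo)) K +
              dist (ζc j - ((ε/2) * ss j) • uo) (x + ss j • (v - (ε/2) • uo)) :=
              Metric.infDist_le_infDist_add_dist
          _ ≤ (ε/16) * ss j + (ss j * (1/((j:ℝ)+1)) + ss j * ‖vv j - v‖) := by linarith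
      have hm1 : ss j * (1/((j:ℝ)+1)) ≤ ss j * (ε/16) :=
        mul_le_mul_of_nonneg_left hjsm (hsspos j).le
      have hm2 : ss j * ‖vv j - v‖ ≤ ss j * (ε/16) :=
        mul_le_mul_of_nonneg_left hjvv (hsspos j).le
      nlinarith [hlow2, hup2, hm1, hm2, mul_pos hε (hsspos j)]
    -- ============ construct the approximating sequence ============
    intro t htpos ht0
    have hnear : ∀ i : ℕ, ∃ z ∈ frontier K,
        Metric.infDist (x + t i • v) (frontier K) = dist (x + t i • v) z :=
      fun i => hFKcl.exists_infDist_eq_dist hFKne _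
    choose z hz1 hz2 using hnear
    refine ⟨fun i => (t i)⁻¹ • (z i - x), ?_, ?_⟩
    · -- tendsto
      have hwd : ∀ i, dist ((t i)⁻¹ • (z i - x)) v =
          Metric.infDist (x + t i • v) (frontier K) / t i := by
        intro i
        have h1 : (t i)⁻¹ • (z i - x) - v = (t i)⁻¹ • (z i - (x + t i • v)) := by
          rw [smul_sub, smul_sub]
          rw [smul_add, smul_smul, inv_mul_cancel₀ (htpos i).ne', one_smul]
          abel
        rw [dist_eq_norm, h1, norm_smul, Real.norm_eq_abs,
          abs_of_pos (inv_pos.mpr (htpos i)), hz2 i, dist_comm, dist_eq_norm]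
        ring
      rw [Metric.tendsto_atTop]
      intro ε'' hε''
      have hev := hKEY (ε''/2) (by positivity)
      have httW : Tendsto t atTop (𝓝[>] (0:ℝ)) :=
        tendsto_nhdsWithin_iff.mpr ⟨ht0, Filter.Eventually.of_forall htpos⟩
      have hev2 := (httW.eventually hev).and (Filter.Eventually.of_forall (fun i => htpos i))
      rw [Filter.eventually_atTop] at hev2
      obtain ⟨N, hN⟩ := hev2
      refine ⟨N, fun i hi => ?_⟩
      obtain ⟨h1, h2⟩ := hN i hi
      rw [hwd i]
      have h3 : Metric.infDist (x + t i • v) (frontier K) / t i ≤ ε''/2 := by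
        rw [div_le_iff₀ h2]; linarith [h1]
      linarith
    · -- membership
      intro i
      have : x + t i • (t i)⁻¹ • (z i - x) = z i := by
        rw [smul_smul, mul_inv_cancel₀ (htpos i).ne', one_smul]
        abel
      rw [this]; exact hz1 i
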